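/- The function s tends to 1 as q tends to 0 from the right: lim_{q→0⁺} s(q) = 1. -/

import Mathlib

open Real Filter

/-- Florian's bound. -/
noncomputable def florianS (q : ℝ) : ℝ :=
  (π * q ^ 2 + 2 * (1 - q ^ 2) * arcsin (q / (1 + q))) / (2 * q * Real.sqrt (1 + 2 * q))

lemma arcsin_slope :
    Tendsto (fun x : ℝ => arcsin x / x) (nhdsWithin 0 {0}ᶜ) (nhds 1) := by
  have h := Real.hasDerivAt_arcsin (x := 0) (by norm_num) (by norm_num)
  rw [hasDerivAt_iff_tendsto_slope] at h
  have : (1 : ℝ) / Real.sqrt (1 - 0 ^ 2) = 1 := by norm_num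
  rw [this] at h
  refine h.congr (fun x => ?_)
  simp [slope_def_field, Real.arcsin_zero]

theorem florian_tendsto_one :
    Filter.Tendsto florianS (nhdsWithin 0 (Set.Ioi (0 : ℝ))) (nhds 1) := by
  set l := nhdsWithin (0:ℝ) (Set.Ioi (0:ℝ))
  have hpos : ∀ᶠ q in l, 0 < q := self_mem_nhdsWithin
  -- map into punctured nhds
  have hmap : Tendsto (fun q : ℝ => q / (1 + q)) l (nhdsWithin 0 {0}ᶜ) := by
    rw [tendsto_nhdsWithin_iff]
    constructor
    · have : Tendsto (fun q : ℝ => q / (1 + q)) (nhds 0) (nhds (0 / (1 + 0))) :=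
        tendsto_id.div (tendsto_const_nhds.add tendsto_id) (by norm_num)
      simpa using this.mono_left nhdsWithin_le_nhds
    · filter_upwards [hpos] with q hq
      have h1 : 0 < 1 + q := by linarith
      simp [div_ne_zero (ne_of_gt hq) (ne_of_gt h1)]
  have hg : Tendsto (fun q : ℝ => arcsin (q / (1 + q)) / (q / (1 + q))) l (nhds 1) :=
    arcsin_slope.comp hmap
  have hsqrt : Tendsto (fun q : ℝ => Real.sqrt (1 + 2 * q)) l (nhds 1) := by
    have : Tendsto (fun q : ℝ => Real.sqrt (1 + 2 * q)) (nhds 0)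
        (nhds (Real.sqrt (1 + 2 * 0))) :=
      (Real.continuous_sqrt.comp (by continuity)).tendsto 0
    simpa using this.mono_left nhdsWithin_le_nhds
  have hinv : Tendsto (fun q : ℝ => 1 / (1 + q)) l (nhds 1) := by
    have : Tendsto (fun q : ℝ => 1 / (1 + q)) (nhds 0) (nhds (1 / (1 + 0))) :=
      tendsto_const_nhds.div (tendsto_const_nhds.add tendsto_id) (by norm_num)
    simpa using this.mono_left nhdsWithin_le_nhds
  have hq2 : Tendsto (fun q : ℝ => (1 - q ^ 2 : ℝ)) l (nhds 1) := by
    have : Tendsto (fun q : ℝ => (1 - q ^ 2 : ℝ)) (nhds 0) (nhds (1 - 0 ^ 2)) := by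
      exact tendsto_const_nhds.sub ((tendsto_id.pow 2))
    simpa using this.mono_left nhdsWithin_le_nhds
  have hlin : Tendsto (fun q : ℝ => π * q) l (nhds 0) := by
    have : Tendsto (fun q : ℝ => π * q) (nhds 0) (nhds (π * 0)) :=
      tendsto_const_nhds.mul tendsto_id
    simpa using this.mono_left nhdsWithin_le_nhds
  -- target auxiliary function
  have hF : Tendsto (fun q : ℝ =>
      π * q / (2 * Real.sqrt (1 + 2 * q)) +
        (1 - q ^ 2) / Real.sqrt (1 + 2 * q) *
          ((arcsin (q / (1 + q)) / (q / (1 + q))) * (1 / (1 + q)))) l (nhds 1) := by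
    have h1 : Tendsto (fun q : ℝ => π * q / (2 * Real.sqrt (1 + 2 * q))) l (nhds 0) := by
      have := hlin.div (hsqrt.const_mul 2) (by norm_num)
      rw [mul_one, zero_div] at this
      exact this
    have h2 : Tendsto (fun q : ℝ => (1 - q ^ 2) / Real.sqrt (1 + 2 * q) *
        ((arcsin (q / (1 + q)) / (q / (1 + q))) * (1 / (1 + q)))) l (nhds 1) := by
      have := (hq2.div hsqrt (by norm_num)).mul (hg.mul hinv)
      simpa using this
    have := h1.add h2
    simpa using this
  refine hF.congr' ?_
  filter_upwards [hpos] with q hq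
  have h1 : (0:ℝ) < 1 + q := by linarith
  have h2 : (0:ℝ) < 1 + 2 * q := by linarith
  have hs : Real.sqrt (1 + 2 * q) ≠ 0 := by positivity
  unfold florianS
  field_simp
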